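/- Let f and g be generators and r, s ∈ {0,1}². Define h : [0,1] → [0,∞) by h(x) := ∫₀¹ f(frac((−1)^{r₁} x + (−1)^{r₁+s₂} y)) g(y) dy, and let t := ((r₁+r₂) mod 2, (s₁+s₂+1) mod 2) ∈ {0,1}². Then h is a generator, and for every (u₁, u₂) ∈ [0,1]², ∫₀^{u₁} ∫₀^{u₂} ∫₀¹ f(frac((−1)^{r₁} z + (−1)^{r₂} x)) · g(frac((−1)^{s₁} y + (−1)^{s₂} z)) dz dy dx = ∫₀^{u₁} ∫₀^{u₂} h(frac((−1)^{t₁} x + (−1)^{t₂} y)) dy dx. That is, the Darsow–Nguyen–Olsen *-product of the copulas C_f^r and C_g^s is the copula C_h^t, so the family of such copulas is closed under the *-product. -/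

import Mathlib

open MeasureTheory

/-- A generator: a probability density on `[0,1]`. -/
def IsGenerator (f : ℝ → ℝ) : Prop :=
  Measurable f ∧ (∀ x ∈ Set.Icc (0:ℝ) 1, 0 ≤ f x) ∧ ∫ x in Set.Icc (0:ℝ) 1, f x = 1

private lemma fract_add_pm_int {ε : ℝ} (hε : ε = 1 ∨ ε = -1) (w : ℝ) (m : ℤ) :
    Int.fract (w + ε * m) = Int.fract w := by
  rcases hε with hε | hε <;> subst hε
  · simpa using Int.fract_add_int w m
  · rw [show w + (-1 : ℝ) * m = w - m by ring]
    exact Int.fract_sub_intCast w m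

private lemma map_translate (d p q : ℝ) :
    Measure.map (fun z : ℝ => z - d) (volume.restrict (Set.Ioc (p + d) (q + d)))
      = volume.restrict (Set.Ioc p q) := by
  have hm : Measurable fun z : ℝ => z - d := measurable_id.sub_const d
  have hpre : (fun z : ℝ => z - d) ⁻¹' (Set.Ioc p q) = Set.Ioc (p + d) (q + d) := by
    ext z
    simp only [Set.mem_preimage, Set.mem_Ioc]
    constructor <;> rintro ⟨h1, h2⟩ <;> constructor <;> linarith
  rw [← hpre, ← Measure.restrict_map hm measurableSet_Ioc,
    (measurePreserving_sub_right volume d).map_eq]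

private lemma map_fract_Ioc (a : ℝ) :
    Measure.map Int.fract (volume.restrict (Set.Ioc a (a + 1)))
      = volume.restrict (Set.Ioc (0:ℝ) 1) := by
  set n : ℤ := ⌊a⌋ + 1 with hn
  have hfl : ((n : ℝ) - 1) = (⌊a⌋ : ℝ) := by rw [hn]; push_cast; ring
  have han : a < (n : ℝ) := by
    have := Int.lt_floor_add_one a; rw [hn]; push_cast; linarith
  have hn1 : (n : ℝ) ≤ a + 1 := by
    have := Int.floor_le a; rw [hn]; push_cast; linarith
  have hsplit : Set.Ioc a (a + 1) = Set.Ioc a (n : ℝ) ∪ Set.Ioc (n : ℝ) (a + 1) :=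
    (Set.Ioc_union_Ioc_eq_Ioc han.le hn1).symm
  have hone : ∀ᵐ z : ℝ, z ≠ (n : ℝ) := by
    have : (volume : Measure ℝ) {(n : ℝ)} = 0 := Real.volume_singleton
    filter_upwards [measure_eq_zero_iff_ae_notMem.mp this] with z hz
    simpa using hz
  -- piece 1 : Ioc a n, fract = z - (n-1) a.e.
  have hcongr1 : (Int.fract : ℝ → ℝ)
      =ᵐ[volume.restrict (Set.Ioc a (n : ℝ))] fun z => z - ((n : ℝ) - 1) := by
    filter_upwards [ae_restrict_mem measurableSet_Ioc,
      hone.filter_mono (ae_mono Measure.restrict_le_self)] with z hz hzn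
    have hz1 : ((n : ℝ) - 1) ≤ z := by
      rw [hfl]; exact (Int.floor_le a).trans hz.1.le
    have hz2 : z < (n : ℝ) := lt_of_le_of_ne hz.2 hzn
    have hfloor : ⌊z⌋ = n - 1 := by
      rw [Int.floor_eq_iff]
      push_cast
      constructor <;> linarith
    rw [← Int.self_sub_floor, hfloor]
    push_cast
    ring
  have hmap1 : Measure.map Int.fract (volume.restrict (Set.Ioc a (n : ℝ)))
      = volume.restrict (Set.Ioc (Int.fract a) 1) := by
    rw [Measure.map_congr hcongr1]
    have e1 : Int.fract a + ((n:ℝ) - 1) = a := by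
      rw [hfl, ← Int.self_sub_floor]; ring
    have e2 : (1:ℝ) + ((n:ℝ) - 1) = (n:ℝ) := by ring
    have hset1 : Set.Ioc a (n : ℝ)
        = Set.Ioc (Int.fract a + ((n:ℝ) - 1)) ((1:ℝ) + ((n:ℝ) - 1)) := by
      rw [e1, e2]
    rw [hset1, map_translate]
  -- piece 2 : Ioc n (a+1), fract = z - n everywhere on the set
  have hcongr2 : (Int.fract : ℝ → ℝ)
      =ᵐ[volume.restrict (Set.Ioc (n : ℝ) (a + 1))] fun z => z - (n : ℝ) := by
    filter_upwards [ae_restrict_mem measurableSet_Ioc] with z hz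
    have hfloor : ⌊z⌋ = n := by
      rw [Int.floor_eq_iff]
      constructor
      · exact hz.1.le
      · push_cast; linarith [hz.2, han]
    rw [← Int.self_sub_floor, hfloor]
  have hmap2 : Measure.map Int.fract (volume.restrict (Set.Ioc (n : ℝ) (a + 1)))
      = volume.restrict (Set.Ioc (0:ℝ) (Int.fract a)) := by
    rw [Measure.map_congr hcongr2]
    have e3 : (0:ℝ) + (n:ℝ) = (n:ℝ) := by ring
    have e4 : Int.fract a + (n:ℝ) = a + 1 := by
      rw [← Int.self_sub_floor, ← hfl]; ring
    have hset2 : Set.Ioc (n : ℝ) (a + 1)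
        = Set.Ioc ((0:ℝ) + (n:ℝ)) (Int.fract a + (n:ℝ)) := by
      rw [e3, e4]
    rw [hset2, map_translate]
  have hdisj : Disjoint (Set.Ioc a (n : ℝ)) (Set.Ioc (n : ℝ) (a + 1)) :=
    Set.Ioc_disjoint_Ioc_of_le le_rfl
  have hfr0 : 0 ≤ Int.fract a := Int.fract_nonneg a
  have hfr1 : Int.fract a ≤ 1 := (Int.fract_lt_one a).le
  rw [hsplit, Measure.restrict_union hdisj measurableSet_Ioc,
    Measure.map_add _ _ measurable_fract, hmap1, hmap2, add_comm,
    ← Measure.restrict_union (Set.Ioc_disjoint_Ioc_of_le le_rfl) measurableSet_Ioc,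
    Set.Ioc_union_Ioc_eq_Ioc hfr0 hfr1]

private lemma mp (c ε : ℝ) (hε : ε = 1 ∨ ε = -1) :
    MeasurePreserving (fun z : ℝ => Int.fract (c + ε * z))
      (volume.restrict (Set.Ioc (0:ℝ) 1)) (volume.restrict (Set.Ioc (0:ℝ) 1)) := by
  have hA : Measurable fun z : ℝ => c + ε * z :=
    measurable_const.add (measurable_id.const_mul ε)
  constructor
  · exact measurable_fract.comp hA
  · have hcomp : (fun z : ℝ => Int.fract (c + ε * z)) = Int.fract ∘ fun z : ℝ => c + ε * z :=
      rfl
    rw [hcomp, ← Measure.map_map measurable_fract hA]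
    rcases hε with hε | hε <;> subst hε
    · have hpre : (fun z : ℝ => c + 1 * z) ⁻¹' (Set.Ioc c (c + 1)) = Set.Ioc (0:ℝ) 1 := by
        ext z
        simp only [Set.mem_preimage, Set.mem_Ioc]
        constructor <;> rintro ⟨h1, h2⟩ <;> constructor <;> linarith
      have : Measure.map (fun z : ℝ => c + 1 * z) (volume.restrict (Set.Ioc (0:ℝ) 1))
          = volume.restrict (Set.Ioc c (c + 1)) := by
        rw [← hpre, ← Measure.restrict_map hA measurableSet_Ioc]
        congr 1
        have : (fun z : ℝ => c + 1 * z) = fun z : ℝ => c + z := by funext z; ring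
        rw [this, (measurePreserving_add_left volume c).map_eq]
      rw [this, map_fract_Ioc c]
    · have hpre : (fun z : ℝ => c + (-1) * z) ⁻¹' (Set.Ioc (c - 1) ((c - 1) + 1))
          = Set.Ico (0:ℝ) 1 := by
        ext z
        simp only [Set.mem_preimage, Set.mem_Ioc, Set.mem_Ico]
        constructor <;> rintro ⟨h1, h2⟩ <;> constructor <;> linarith
      have hres : volume.restrict (Set.Ioc (0:ℝ) 1) = volume.restrict (Set.Ico (0:ℝ) 1) :=
        (Measure.restrict_congr_set Ico_ae_eq_Ioc).symm
      have : Measure.map (fun z : ℝ => c + (-1) * z) (volume.restrict (Set.Ioc (0:ℝ) 1))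
          = volume.restrict (Set.Ioc (c - 1) ((c - 1) + 1)) := by
        rw [hres, ← hpre, ← Measure.restrict_map hA measurableSet_Ioc]
        congr 1
        have : (fun z : ℝ => c + (-1) * z) = fun z : ℝ => c - z := by funext z; ring
        rw [this, (Measure.measurePreserving_sub_left volume c).map_eq]
      rw [this, map_fract_Ioc (c - 1)]

private lemma cov_integral {ψ : ℝ → ℝ} (hψ : Measurable ψ) (c ε : ℝ) (hε : ε = 1 ∨ ε = -1) :
    ∫ z in Set.Ioc (0:ℝ) 1, ψ (Int.fract (c + ε * z)) = ∫ z in Set.Ioc (0:ℝ) 1, ψ z := by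
  have h1 := integral_map (μ := volume.restrict (Set.Ioc (0:ℝ) 1))
    (mp c ε hε).measurable.aemeasurable (f := ψ) hψ.aestronglyMeasurable
  rw [(mp c ε hε).map_eq] at h1
  exact h1.symm

private lemma cov_integral' {ψ : ℝ → ℝ} (hψ : Measurable ψ) (c ε : ℝ) (hε : ε = 1 ∨ ε = -1) :
    ∫ z in Set.Ioc (0:ℝ) 1, ψ (Int.fract (ε * z + c)) = ∫ z in Set.Ioc (0:ℝ) 1, ψ z := by
  rw [show (fun z : ℝ => ψ (Int.fract (ε * z + c))) = fun z => ψ (Int.fract (c + ε * z)) by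
    funext z; rw [add_comm]]
  exact cov_integral hψ c ε hε

private lemma cov_integrable {ψ : ℝ → ℝ} (hψ : Measurable ψ) (c ε : ℝ)
    (hε : ε = 1 ∨ ε = -1) :
    Integrable (fun z => ψ (Int.fract (c + ε * z))) (volume.restrict (Set.Ioc (0:ℝ) 1)) ↔
      Integrable ψ (volume.restrict (Set.Ioc (0:ℝ) 1)) :=
  (mp c ε hε).integrable_comp hψ.aestronglyMeasurable

private lemma cov_integrable' {ψ : ℝ → ℝ} (hψ : Measurable ψ) (c ε : ℝ)
    (hε : ε = 1 ∨ ε = -1) :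
    Integrable (fun z => ψ (Int.fract (ε * z + c))) (volume.restrict (Set.Ioc (0:ℝ) 1)) ↔
      Integrable ψ (volume.restrict (Set.Ioc (0:ℝ) 1)) := by
  rw [show (fun z : ℝ => ψ (Int.fract (ε * z + c))) = fun z => ψ (Int.fract (c + ε * z)) by
    funext z; rw [add_comm]]
  exact cov_integrable hψ c ε hε

private lemma core {f g : ℝ → ℝ} (hfm : Measurable f) (hgm : Measurable g)
    {a b c d : ℝ} (ha : a = 1 ∨ a = -1) (hb : b = 1 ∨ b = -1) (hc : c = 1 ∨ c = -1)
    (hd : d = 1 ∨ d = -1) (x y : ℝ) :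
    ∫ z in Set.Ioc (0:ℝ) 1, f (Int.fract (a * z + b * x)) * g (Int.fract (c * y + d * z))
      = ∫ v in Set.Icc (0:ℝ) 1,
          f (Int.fract (a * Int.fract (a * b * x + -(c * d) * y) + a * d * v)) * g v := by
  have ha2 : a * a = 1 := by rcases ha with h | h <;> rw [h] <;> norm_num
  have hd2 : d * d = 1 := by rcases hd with h | h <;> rw [h] <;> norm_num
  have had : a * d = 1 ∨ a * d = -1 := by
    rcases ha with h | h <;> rcases hd with h' | h' <;> rw [h, h'] <;> norm_num
  set K : ℝ := b * x - a * c * d * y with hK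
  set W : ℝ := Int.fract (a * b * x + -(c * d) * y) with hW
  set ψ : ℝ → ℝ := fun v => f (Int.fract (K + a * d * v)) * g (Int.fract v) with hψ
  have hψm : Measurable ψ :=
    (hfm.comp (measurable_fract.comp
      (measurable_const.add (measurable_id.const_mul (a * d))))).mul
      (hgm.comp measurable_fract)
  have hstep : ∀ z : ℝ,
      f (Int.fract (a * z + b * x)) * g (Int.fract (c * y + d * z))
        = ψ (Int.fract (c * y + d * z)) := by
    intro z
    simp only [hψ, Int.fract_fract]
    congr 2
    have harg : K + a * d * Int.fract (c * y + d * z)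
        = (a * z + b * x) + a * d * ((-⌊c * y + d * z⌋ : ℤ) : ℝ) := by
      rw [← Int.self_sub_floor, hK]
      push_cast
      linear_combination a * z * hd2
    rw [harg, fract_add_pm_int had]
  have hKW : ∀ v : ℝ, Int.fract (K + a * d * v) = Int.fract (a * W + a * d * v) := by
    intro v
    have harg : K + a * d * v
        = (a * W + a * d * v) + a * ((⌊a * b * x + -(c * d) * y⌋ : ℤ) : ℝ) := by
      rw [hW, ← Int.self_sub_floor, hK]
      push_cast
      linear_combination (-(b * x)) * ha2
    rw [harg, fract_add_pm_int ha]
  calc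
    ∫ z in Set.Ioc (0:ℝ) 1, f (Int.fract (a * z + b * x)) * g (Int.fract (c * y + d * z))
        = ∫ z in Set.Ioc (0:ℝ) 1, ψ (Int.fract (c * y + d * z)) :=
          setIntegral_congr_fun measurableSet_Ioc fun z _ => hstep z
    _ = ∫ v in Set.Ioc (0:ℝ) 1, ψ v := cov_integral hψm (c * y) d hd
    _ = ∫ v in Set.Ioc (0:ℝ) 1, f (Int.fract (a * W + a * d * v)) * g v := by
        refine integral_congr_ae ?_
        have h1 : ∀ᵐ v ∂volume.restrict (Set.Ioc (0:ℝ) 1), v ∈ Set.Ioo (0:ℝ) 1 := by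
          rw [← Measure.restrict_congr_set Ioo_ae_eq_Ioc]
          exact ae_restrict_mem measurableSet_Ioo
        filter_upwards [h1] with v hv
        have hfr : Int.fract v = v := Int.fract_eq_self.2 ⟨hv.1.le, hv.2⟩
        simp only [hψ, hfr, hKW v]
    _ = ∫ v in Set.Icc (0:ℝ) 1, f (Int.fract (a * W + a * d * v)) * g v := by
        rw [Measure.restrict_congr_set Ioc_ae_eq_Icc]

theorem stmt_14 (r s : Fin 2 → Bool) (f g : ℝ → ℝ) (hf : IsGenerator f) (hg : IsGenerator g)
    (h : ℝ → ℝ)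
    (hh : ∀ x : ℝ, h x = ∫ y in Set.Icc (0:ℝ) 1,
        f (Int.fract ((if r 0 then -1 else 1) * x +
            ((if r 0 then -1 else 1) * (if s 1 then -1 else 1)) * y)) * g y)
    (t : Fin 2 → Bool) (ht : t = ![r 0 != r 1, s 0 == s 1]) :
    IsGenerator h ∧
    ∀ u₁ ∈ Set.Icc (0:ℝ) 1, ∀ u₂ ∈ Set.Icc (0:ℝ) 1,
      (∫ x in (0:ℝ)..u₁, ∫ y in (0:ℝ)..u₂, ∫ z in (0:ℝ)..1,
          f (Int.fract ((if r 0 then -1 else 1) * z + (if r 1 then -1 else 1) * x)) *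
            g (Int.fract ((if s 0 then -1 else 1) * y + (if s 1 then -1 else 1) * z)))
      = ∫ x in (0:ℝ)..u₁, ∫ y in (0:ℝ)..u₂,
          h (Int.fract ((if t 0 then -1 else 1) * x + (if t 1 then -1 else 1) * y)) := by
  obtain ⟨hfm, hf0, hf1⟩ := hf
  obtain ⟨hgm, hg0, hg1⟩ := hg
  set a : ℝ := if r 0 then -1 else 1 with haDef
  set b : ℝ := if r 1 then -1 else 1 with hbDef
  set c : ℝ := if s 0 then -1 else 1 with hcDef
  set d : ℝ := if s 1 then -1 else 1 with hdDef
  have ha : a = 1 ∨ a = -1 := by rw [haDef]; split <;> simp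
  have hb : b = 1 ∨ b = -1 := by rw [hbDef]; split <;> simp
  have hc : c = 1 ∨ c = -1 := by rw [hcDef]; split <;> simp
  have hd : d = 1 ∨ d = -1 := by rw [hdDef]; split <;> simp
  have ht0 : (if t 0 then (-1:ℝ) else 1) = a * b := by
    subst ht
    cases hr0 : r 0 <;> cases hr1 : r 1 <;>
      simp [haDef, hbDef, hr0, hr1]
  have ht1 : (if t 1 then (-1:ℝ) else 1) = -(c * d) := by
    subst ht
    cases hs0 : s 0 <;> cases hs1 : s 1 <;>
      simp [hcDef, hdDef, hs0, hs1]
  have hrIcc : volume.restrict (Set.Ioc (0:ℝ) 1) = volume.restrict (Set.Icc (0:ℝ) 1) :=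
    Measure.restrict_congr_set Ioc_ae_eq_Icc
  have hfInt : IntegrableOn f (Set.Icc (0:ℝ) 1) := by
    by_contra hcon
    rw [integral_undef hcon] at hf1
    norm_num at hf1
  have hgInt : IntegrableOn g (Set.Icc (0:ℝ) 1) := by
    by_contra hcon
    rw [integral_undef hcon] at hg1
    norm_num at hg1
  have hfIntIoc : Integrable f (volume.restrict (Set.Ioc (0:ℝ) 1)) := by
    rw [hrIcc]; exact hfInt
  have hgIntIoc : Integrable g (volume.restrict (Set.Ioc (0:ℝ) 1)) := by
    rw [hrIcc]; exact hgInt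
  have hhfun : h = fun x => ∫ y in Set.Icc (0:ℝ) 1,
      f (Int.fract (a * x + a * d * y)) * g y := funext hh
  have hFm : Measurable fun p : ℝ × ℝ => f (Int.fract (a * p.1 + a * d * p.2)) * g p.2 :=
    (hfm.comp (measurable_fract.comp
      ((measurable_fst.const_mul a).add (measurable_snd.const_mul (a * d))))).mul
      (hgm.comp measurable_snd)
  have hmh : Measurable h := by
    rw [hhfun]
    exact hFm.stronglyMeasurable.integral_prod_right'.measurable
  have hpos : ∀ x ∈ Set.Icc (0:ℝ) 1, 0 ≤ h x := by
    intro x hx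
    rw [hh]
    refine setIntegral_nonneg measurableSet_Icc fun y hy => mul_nonneg ?_ (hg0 y hy)
    exact hf0 _ ⟨Int.fract_nonneg _, (Int.fract_lt_one _).le⟩
  have hcov : ∀ y : ℝ, ∫ x in Set.Ioc (0:ℝ) 1, f (Int.fract (a * x + a * d * y))
      = ∫ x in Set.Ioc (0:ℝ) 1, f x := fun y => cov_integral' hfm (a * d * y) a ha
  have hFint : Integrable (Function.uncurry fun x y : ℝ =>
      f (Int.fract (a * x + a * d * y)) * g y)
      ((volume.restrict (Set.Ioc (0:ℝ) 1)).prod (volume.restrict (Set.Ioc (0:ℝ) 1))) := by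
    show Integrable (fun p : ℝ × ℝ => f (Int.fract (a * p.1 + a * d * p.2)) * g p.2)
      ((volume.restrict (Set.Ioc (0:ℝ) 1)).prod (volume.restrict (Set.Ioc (0:ℝ) 1)))
    rw [integrable_prod_iff' hFm.aestronglyMeasurable]
    constructor
    · refine Filter.Eventually.of_forall fun y => ?_
      exact ((cov_integrable' hfm (a * d * y) a ha).2 hfIntIoc).mul_const (g y)
    · have heq : ∀ y : ℝ, (∫ x in Set.Ioc (0:ℝ) 1,
          ‖f (Int.fract (a * x + a * d * y)) * g y‖)
          = (∫ x in Set.Ioc (0:ℝ) 1, ‖f x‖) * ‖g y‖ := by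
        intro y
        calc ∫ x in Set.Ioc (0:ℝ) 1, ‖f (Int.fract (a * x + a * d * y)) * g y‖
            = ∫ x in Set.Ioc (0:ℝ) 1, ‖f (Int.fract (a * x + a * d * y))‖ * ‖g y‖ := by
              simp only [norm_mul]
          _ = (∫ x in Set.Ioc (0:ℝ) 1, ‖f (Int.fract (a * x + a * d * y))‖) * ‖g y‖ :=
              integral_mul_const _ _
          _ = (∫ x in Set.Ioc (0:ℝ) 1, ‖f x‖) * ‖g y‖ := by
              rw [cov_integral' hfm.norm (a * d * y) a ha]
      refine ((hgIntIoc.norm.const_mul (∫ x in Set.Ioc (0:ℝ) 1, ‖f x‖)).congr ?_)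
      exact Filter.Eventually.of_forall fun y => (heq y).symm
  have hint1 : ∫ x in Set.Icc (0:ℝ) 1, h x = 1 := by
    rw [hhfun, ← hrIcc]
    rw [MeasureTheory.integral_integral_swap hFint]
    have hinner : ∀ y : ℝ, ∫ x in Set.Ioc (0:ℝ) 1,
        f (Int.fract (a * x + a * d * y)) * g y = g y := by
      intro y
      rw [integral_mul_const, hcov y, hrIcc, hf1, one_mul]
    simp only [hinner]
    rw [hrIcc]
    exact hg1
  have hpt : ∀ x y : ℝ,
      (∫ z in (0:ℝ)..1, f (Int.fract (a * z + b * x)) * g (Int.fract (c * y + d * z)))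
        = h (Int.fract ((if t 0 then (-1:ℝ) else 1) * x + (if t 1 then (-1:ℝ) else 1) * y)) := by
    intro x y
    rw [intervalIntegral.integral_of_le zero_le_one, ht0, ht1, hh]
    exact core hfm hgm ha hb hc hd x y
  refine ⟨⟨hmh, hpos, hint1⟩, fun u₁ _ u₂ _ => ?_⟩
  exact intervalIntegral.integral_congr fun x _ =>
    intervalIntegral.integral_congr fun y _ => hpt x y
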